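/- Let g : [a,b] → ℝ be continuously differentiable with g(a) = g(b) = 0, and suppose the support of g is contained in the union of two disjoint measurable sets Z ∪ L ⊆ [a,b]. Then for every t ∈ [a,b], g(t)² ≤ 2 |Z| ∫_Z g'(s)² ds + 2 |L| ∫_L g'(s)² ds, where |Z|, |L| denote Lebesgue measure. -/

import Mathlib

open MeasureTheory

/-- Elementary Cauchy–Schwarz on a set, via the discriminant trick. -/
lemma cs_aux (A : Set ℝ) (hμ : volume A ≠ ⊤) (f : ℝ → ℝ)
    (hf : IntegrableOn (fun s => |f s|) A)
    (hf2 : IntegrableOn (fun s => f s ^ 2) A) :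
    (∫ s in A, |f s|) ^ 2 ≤ (volume A).toReal * ∫ s in A, f s ^ 2 := by
  set M : ℝ := (volume A).toReal with hM
  set I : ℝ := ∫ s in A, f s ^ 2 with hI
  set J : ℝ := ∫ s in A, |f s| with hJ
  have hIconst : ∀ c : ℝ, IntegrableOn (fun _ : ℝ => c) A :=
    fun c => integrableOn_const hμ
  have key : ∀ ε : ℝ, 0 ≤ M * (ε * ε) + (-(2 * J)) * ε + I := by
    intro ε
    rcases le_or_gt ε 0 with hε | hε
    · have hJ0 : 0 ≤ J := integral_nonneg fun s => abs_nonneg _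
      have hI0 : 0 ≤ I := integral_nonneg fun s => sq_nonneg _
      have hM0 : 0 ≤ M := ENNReal.toReal_nonneg
      nlinarith [mul_self_nonneg ε, mul_nonneg hJ0 (neg_nonneg.2 hε)]
    · -- pointwise: 2 ε |f s| ≤ ε² + f s²
      have hpt : ∀ s : ℝ, 2 * ε * |f s| ≤ ε ^ 2 + f s ^ 2 := by
        intro s
        nlinarith [sq_nonneg (ε - |f s|), sq_abs (f s)]
      
      have hint : ∫ s in A, 2 * ε * |f s| ≤ ∫ s in A, (ε ^ 2 + f s ^ 2) := by
        refine integral_mono (hf.const_mul _) ((hIconst (ε ^ 2)).add hf2) ?_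
        intro s; exact hpt s
      have h1 : ∫ s in A, 2 * ε * |f s| = 2 * ε * J := by
        rw [hJ, ← integral_const_mul]
      have h2 : ∫ s in A, (ε ^ 2 + f s ^ 2) = ε ^ 2 * M + I := by
        rw [integral_add (hIconst (ε ^ 2)) hf2, setIntegral_const, smul_eq_mul,
          mul_comm, hI, hM, Measure.real]
      rw [h1, h2] at hint
      nlinarith
  have hd : discrim M (-(2 * J)) I ≤ 0 := discrim_le_zero key
  rw [discrim] at hd
  nlinarith

/-- Key pointwise estimate in the weak comparison principle: if `g` is `C¹` on
`[a,b]`, vanishes at both endpoints, and its support is contained in the union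
of two disjoint measurable sets `Z ∪ L ⊆ [a,b]`, then for every `t ∈ [a,b]`
`g(t)² ≤ 2|Z| ∫_Z g'² + 2|L| ∫_L g'²`. -/
theorem stmt4 (a b : ℝ) (hab : a ≤ b) (g g' : ℝ → ℝ)
    (hderiv : ∀ x ∈ Set.Icc a b, HasDerivAt g (g' x) x)
    (hcont : ContinuousOn g' (Set.Icc a b))
    (hga : g a = 0) (hgb : g b = 0)
    (Z L : Set ℝ) (hZ : MeasurableSet Z) (hL : MeasurableSet L)
    (hdisj : Disjoint Z L) (hsub : Z ∪ L ⊆ Set.Icc a b)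
    (hsupp : Function.support g ⊆ Z ∪ L) :
    ∀ t ∈ Set.Icc a b,
      (g t) ^ 2 ≤ 2 * (volume Z).toReal * (∫ s in Z, (g' s) ^ 2)
        + 2 * (volume L).toReal * (∫ s in L, (g' s) ^ 2) := by
  intro t ht
  obtain ⟨hat, htb⟩ := ht
  -- basic integrability facts
  have hvol : volume (Set.Icc a b) ≠ ⊤ := by
    rw [Real.volume_Icc]; exact ENNReal.ofReal_ne_top
  have hvolZ : volume Z ≠ ⊤ :=
    fun h => hvol (top_le_iff.1 (h ▸ measure_mono fun x hx => hsub (Or.inl hx)))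
  have hvolL : volume L ≠ ⊤ :=
    fun h => hvol (top_le_iff.1 (h ▸ measure_mono fun x hx => hsub (Or.inr hx)))
  have habs : IntegrableOn (fun s => |g' s|) (Set.Icc a b) :=
    (hcont.abs).integrableOn_compact isCompact_Icc
  have hsq : IntegrableOn (fun s => (g' s) ^ 2) (Set.Icc a b) :=
    (hcont.pow 2).integrableOn_compact isCompact_Icc
  have habsZ : IntegrableOn (fun s => |g' s|) Z :=
    habs.mono_set fun x hx => hsub (Or.inl hx)
  have habsL : IntegrableOn (fun s => |g' s|) L :=
    habs.mono_set fun x hx => hsub (Or.inr hx)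
  have hsqZ : IntegrableOn (fun s => (g' s) ^ 2) Z :=
    hsq.mono_set fun x hx => hsub (Or.inl hx)
  have hsqL : IntegrableOn (fun s => (g' s) ^ 2) L :=
    hsq.mono_set fun x hx => hsub (Or.inr hx)
  -- the last zero of g before t
  have hgc : ContinuousOn g (Set.Icc a b) :=
    fun x hx => (hderiv x hx).continuousAt.continuousWithinAt
  set K : Set ℝ := Set.Icc a t ∩ g ⁻¹' {0} with hK
  have hKsub : K ⊆ Set.Icc a t := Set.inter_subset_left
  have hKsub' : Set.Icc a t ⊆ Set.Icc a b := Set.Icc_subset_Icc le_rfl htb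
  have hKcl : IsClosed K :=
    (hgc.mono hKsub').preimage_isClosed_of_isClosed isClosed_Icc isClosed_singleton
  have hKcp : IsCompact K := (isCompact_Icc (a := a) (b := t)).of_isClosed_subset hKcl hKsub
  have hKne : K.Nonempty := ⟨a, ⟨le_rfl, hat⟩, hga⟩
  set c : ℝ := sSup K with hc
  have hcK : c ∈ K := hKcp.sSup_mem hKne
  obtain ⟨⟨hac, hct⟩, hgc0⟩ := hcK
  have hgc0 : g c = 0 := hgc0
  -- Ioc c t ⊆ Z ∪ L
  have hIoc : Set.Ioc c t ⊆ Z ∪ L := by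
    intro x hx
    refine hsupp ?_
    simp only [Function.mem_support]
    intro hgx
    have hxK : x ∈ K := ⟨⟨hac.trans hx.1.le, hx.2⟩, hgx⟩
    exact absurd (le_csSup hKcp.bddAbove hxK) (not_le.2 hx.1)
  -- FTC on [c, t]
  have hIccct : Set.Icc c t ⊆ Set.Icc a b := Set.Icc_subset_Icc hac htb
  have hftc : ∫ x in c..t, g' x = g t - g c := by
    refine intervalIntegral.integral_eq_sub_of_hasDerivAt ?_ ?_
    · intro x hx
      rw [Set.uIcc_of_le hct] at hx
      exact hderiv x (hIccct hx)
    · exact (hcont.mono (by rw [Set.uIcc_of_le hct]; exact hIccct)).intervalIntegrable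
  have hgt : g t = ∫ x in Set.Ioc c t, g' x := by
    rw [← intervalIntegral.integral_of_le hct, hftc, hgc0, sub_zero]
  -- bound |g t| by integral of |g'| over Ioc c t
  have habsIoc : IntegrableOn (fun s => |g' s|) (Set.Ioc c t) :=
    habs.mono_set ((Set.Ioc_subset_Icc_self).trans hIccct)
  have hbound : |g t| ≤ ∫ s in Set.Ioc c t, |g' s| := by
    rw [hgt]
    simpa [Real.norm_eq_abs] using
      norm_integral_le_integral_norm (μ := volume.restrict (Set.Ioc c t)) g'
  -- split over Z and L
  have hdecomp : Set.Ioc c t = (Set.Ioc c t ∩ Z) ∪ (Set.Ioc c t ∩ L) := by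
    rw [← Set.inter_union_distrib_left]
    exact (Set.inter_eq_left.2 hIoc).symm
  have hdisj' : Disjoint (Set.Ioc c t ∩ Z) (Set.Ioc c t ∩ L) :=
    hdisj.mono Set.inter_subset_right Set.inter_subset_right
  have hsplit : ∫ s in Set.Ioc c t, |g' s|
      = (∫ s in Set.Ioc c t ∩ Z, |g' s|) + ∫ s in Set.Ioc c t ∩ L, |g' s| := by
    have h := setIntegral_union (f := fun s => |g' s|) (μ := volume) hdisj'
      (measurableSet_Ioc.inter hL)
      (habsIoc.mono_set Set.inter_subset_left) (habsIoc.mono_set Set.inter_subset_left)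
    rw [← hdecomp] at h
    exact h
  have hmonoZ : ∫ s in Set.Ioc c t ∩ Z, |g' s| ≤ ∫ s in Z, |g' s| := by
    refine setIntegral_mono_set habsZ ?_ (HasSubset.Subset.eventuallyLE Set.inter_subset_right)
    exact Filter.Eventually.of_forall fun s => abs_nonneg _
  have hmonoL : ∫ s in Set.Ioc c t ∩ L, |g' s| ≤ ∫ s in L, |g' s| := by
    refine setIntegral_mono_set habsL ?_ (HasSubset.Subset.eventuallyLE Set.inter_subset_right)
    exact Filter.Eventually.of_forall fun s => abs_nonneg _
  -- Cauchy–Schwarz on Z and on L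
  have hcsZ := cs_aux Z hvolZ g' habsZ hsqZ
  have hcsL := cs_aux L hvolL g' habsL hsqL
  -- put everything together
  have hXnn : (0:ℝ) ≤ ∫ s in Z, |g' s| := integral_nonneg fun s => abs_nonneg _
  have hYnn : (0:ℝ) ≤ ∫ s in L, |g' s| := integral_nonneg fun s => abs_nonneg _
  have h1 : |g t| ≤ (∫ s in Z, |g' s|) + ∫ s in L, |g' s| := by
    calc |g t| ≤ ∫ s in Set.Ioc c t, |g' s| := hbound
    _ = _ := hsplit
    _ ≤ _ := add_le_add hmonoZ hmonoL
  nlinarith [sq_abs (g t), abs_nonneg (g t), sq_nonneg ((∫ s in Z, |g' s|) - ∫ s in L, |g' s|)]
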